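/- The averaged bidirectional OT-weighted contrastive loss is bounded above by the averaged bidirectional InfoNCE loss: −(1/N) * ∑_{i=1}^N [log (d_{ii} / ∑_{j=1}^r d_{ij}) + log (d_{ii} / ∑_{j=1}^r d_{ji})] ≤ −(1/N) * ∑_{i=1}^N [log (e_{ii} / ∑_{j=1}^N e_{ij}) + log (e_{ii} / ∑_{j=1}^N e_{ji})]. -/

import Mathlib

/-- The averaged bidirectional OT-weighted contrastive loss, with affinities
`d i j = exp (q i j * s i j / τ)` and restricted negative sums over the first `r`
indices, is bounded above by the averaged bidirectional InfoNCE loss built from the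
plain affinities `e i j = exp (s i j / τ)` with full sums. -/
theorem ot_bidirectional_le_infonce (N r : ℕ) (hN : 1 ≤ N) (hr : 1 ≤ r) (hrN : r ≤ N)
    (τ : ℝ) (hτ : 0 < τ) (s q : Fin N → Fin N → ℝ)
    (hs : ∀ i j, 0 ≤ s i j) (hq0 : ∀ i j, 0 ≤ q i j) (hq1 : ∀ i j, q i j ≤ 1)
    (hqd : ∀ i, q i i = 1) :
    -(1 / (N : ℝ)) *
        ∑ i,
          (Real.log (Real.exp (q i i * s i i / τ) /
              ∑ j ∈ Finset.univ.filter (fun j : Fin N => (j : ℕ) < r),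
                Real.exp (q i j * s i j / τ)) +
           Real.log (Real.exp (q i i * s i i / τ) /
              ∑ j ∈ Finset.univ.filter (fun j : Fin N => (j : ℕ) < r),
                Real.exp (q j i * s j i / τ)))
      ≤ -(1 / (N : ℝ)) *
          ∑ i,
            (Real.log (Real.exp (s i i / τ) / ∑ j, Real.exp (s i j / τ)) +
             Real.log (Real.exp (s i i / τ) / ∑ j, Real.exp (s j i / τ))) := by
  have hNpos : (0 : ℝ) < N := by exact_mod_cast hN
  rw [neg_mul, neg_mul, neg_le_neg_iff]
  apply mul_le_mul_of_nonneg_left _ (by positivity)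
  apply Finset.sum_le_sum
  intro i _
  have key : ∀ (f g : Fin N → ℝ), (∀ j, 0 ≤ f j) → (∀ j, f j ≤ g j) → g i = f i →
      Real.log (Real.exp (f i / τ) / ∑ j, Real.exp (g j / τ)) ≤
      Real.log (Real.exp (f i / τ) /
        ∑ j ∈ Finset.univ.filter (fun j : Fin N => (j : ℕ) < r), Real.exp (f j / τ)) := by
    intro f g hf hfg hgf
    have hne : (Finset.univ.filter (fun j : Fin N => (j : ℕ) < r)).Nonempty := by
      refine ⟨⟨0, hN⟩, ?_⟩
      simp only [Finset.mem_filter, Finset.mem_univ, true_and]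
      exact lt_of_lt_of_le hr hrN |> fun _ => hr
    have hpos : (0 : ℝ) <
        ∑ j ∈ Finset.univ.filter (fun j : Fin N => (j : ℕ) < r), Real.exp (f j / τ) :=
      Finset.sum_pos (fun j _ => Real.exp_pos _) hne
    have hle : (∑ j ∈ Finset.univ.filter (fun j : Fin N => (j : ℕ) < r),
        Real.exp (f j / τ)) ≤ ∑ j, Real.exp (g j / τ) := by
      calc (∑ j ∈ Finset.univ.filter (fun j : Fin N => (j : ℕ) < r), Real.exp (f j / τ))
          ≤ ∑ j ∈ Finset.univ.filter (fun j : Fin N => (j : ℕ) < r), Real.exp (g j / τ) :=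
            Finset.sum_le_sum (fun j _ => Real.exp_le_exp.2
              (by gcongr; exact hfg j))
        _ ≤ ∑ j, Real.exp (g j / τ) :=
            Finset.sum_le_sum_of_subset_of_nonneg (Finset.filter_subset _ _)
              (fun j _ _ => (Real.exp_pos _).le)
    rw [Real.log_div (Real.exp_ne_zero _) (ne_of_gt hpos),
        Real.log_div (Real.exp_ne_zero _) (ne_of_gt (lt_of_lt_of_le hpos hle))]
    exact sub_le_sub_left (Real.log_le_log hpos hle) _
  have h1 := key (fun j => q i j * s i j) (fun j => s i j) (fun j => mul_nonneg (hq0 i j) (hs i j))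
    (fun j => by
      calc q i j * s i j ≤ 1 * s i j := mul_le_mul_of_nonneg_right (hq1 i j) (hs i j)
        _ = s i j := one_mul _)
    (by simp [hqd i])
  have h2 := key (fun j => q j i * s j i) (fun j => s j i) (fun j => mul_nonneg (hq0 j i) (hs j i))
    (fun j => by
      calc q j i * s j i ≤ 1 * s j i := mul_le_mul_of_nonneg_right (hq1 j i) (hs j i)
        _ = s j i := one_mul _)
    (by simp [hqd i])
  have : q i i * s i i = s i i := by rw [hqd i, one_mul]
  rw [this] at h1 h2 ⊢
  exact add_le_add h1 h2
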